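/- Every subset of ℝ^n with diameter at most 2 is contained in a convex body of constant width 2. -/

import Mathlib

open RealInnerProductSpace
open scoped Pointwise
set_option maxHeartbeats 1000000

/-- Support function of a set `K` in Euclidean space. -/
noncomputable def suppFn {n : ℕ} (K : Set (EuclideanSpace ℝ (Fin n)))
    (v : EuclideanSpace ℝ (Fin n)) : ℝ :=
  sSup ((fun x => ⟪x, v⟫) '' K)

/-- `K` is a convex body of constant width 2: compact, convex, nonempty interior, and
for every unit direction the distance between the two parallel supporting hyperplanes,
namely `h(v) + h(-v)`, equals 2. -/
def IsConstantWidthTwoBody {n : ℕ} (K : Set (EuclideanSpace ℝ (Fin n))) : Prop :=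
  IsCompact K ∧ Convex ℝ K ∧ (interior K).Nonempty ∧
    ∀ v : EuclideanSpace ℝ (Fin n), ‖v‖ = 1 → suppFn K v + suppFn K (-v) = 2

/-- The set of points within distance 2 of every point of `A`. -/
def ballInt {n : ℕ} (A : Set (EuclideanSpace ℝ (Fin n))) : Set (EuclideanSpace ℝ (Fin n)) :=
  {z | ∀ x ∈ A, dist z x ≤ 2}

lemma ballInt_eq {n : ℕ} (A : Set (EuclideanSpace ℝ (Fin n))) :
    ballInt A = ⋂ x ∈ A, Metric.closedBall x 2 := by
  ext z; simp [ballInt, Metric.mem_closedBall]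

lemma convex_ballInt {n : ℕ} (A : Set (EuclideanSpace ℝ (Fin n))) : Convex ℝ (ballInt A) := by
  rw [ballInt_eq]; exact convex_iInter₂ fun x _ => convex_closedBall x 2

lemma isClosed_ballInt {n : ℕ} (A : Set (EuclideanSpace ℝ (Fin n))) : IsClosed (ballInt A) := by
  rw [ballInt_eq]; exact isClosed_biInter fun x _ => Metric.isClosed_closedBall

lemma subset_ballInt_ballInt {n : ℕ} (A : Set (EuclideanSpace ℝ (Fin n))) :
    A ⊆ ballInt (ballInt A) := fun a ha y hy => by
  rw [dist_comm]; exact hy a ha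

lemma ballInt_anti {n : ℕ} {A B : Set (EuclideanSpace ℝ (Fin n))} (h : A ⊆ B) :
    ballInt B ⊆ ballInt A := fun z hz x hx => hz x (h hx)

lemma ballInt_ballInt_ballInt {n : ℕ} (A : Set (EuclideanSpace ℝ (Fin n))) :
    ballInt (ballInt (ballInt A)) = ballInt A :=
  le_antisymm (ballInt_anti (subset_ballInt_ballInt A)) (subset_ballInt_ballInt (ballInt A))

lemma exists_suppFn_eq {n : ℕ} {A : Set (EuclideanSpace ℝ (Fin n))} (hA : IsCompact A)
    (hne : A.Nonempty) (v : EuclideanSpace ℝ (Fin n)) :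
    ∃ a ∈ A, suppFn A v = ⟪a, v⟫ ∧ ∀ x ∈ A, ⟪x, v⟫ ≤ suppFn A v := by
  have hcont : Continuous fun x : EuclideanSpace ℝ (Fin n) => ⟪x, v⟫ :=
    continuous_id.inner continuous_const
  have himg : IsCompact ((fun x => ⟪x, v⟫) '' A) := hA.image hcont
  have hmem : sSup ((fun x => ⟪x, v⟫) '' A) ∈ (fun x => ⟪x, v⟫) '' A :=
    himg.sSup_mem (hne.image _)
  obtain ⟨a, ha, hav⟩ := hmem
  exact ⟨a, ha, hav.symm, fun x hx => le_csSup himg.bddAbove ⟨x, hx, rfl⟩⟩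

/-- Key lemma: if `b` minimizes `⟪·, v⟫` over `ballInt P`, then `b + 2v` is within
distance 2 of every point `k` of `ballInt P` at distance at most 2 from `b`. -/
lemma key {n : ℕ} {P : Set (EuclideanSpace ℝ (Fin n))} {v b : EuclideanSpace ℝ (Fin n)}
    (hv : ‖v‖ = 1) (hb : b ∈ ballInt P)
    (hmin : ∀ k ∈ ballInt P, ⟪b, v⟫ ≤ ⟪k, v⟫)
    {k : EuclideanSpace ℝ (Fin n)} (hk : k ∈ ballInt P) (hbk : dist b k ≤ 2) :
    dist k (b + (2:ℝ) • v) ≤ 2 := by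
  have hadef : dist b k = ‖k - b‖ := by rw [dist_comm, dist_eq_norm]
  set a : ℝ := ‖k - b‖ with ha
  rw [hadef] at hbk
  have ha0 : (0:ℝ) ≤ a := norm_nonneg _
  have hvv : ⟪v, v⟫ = (1:ℝ) := by
    rw [real_inner_self_eq_norm_sq, hv]; norm_num
  have hc : a^2/4 ≤ ⟪k - b, v⟫ := by
    have step : ∀ t : ℝ, 0 < t → t < 1 → (1-t)*a^2/4 ≤ ⟪k - b, v⟫ := by
      intro t ht0 ht1
      have ht1' : (0:ℝ) ≤ 1 - t := by linarith
      set s : ℝ := t*(1-t)*a^2/4 with hsdef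
      have hs0 : 0 ≤ s := by
        have := mul_nonneg (mul_nonneg ht0.le ht1') (sq_nonneg a)
        rw [hsdef]; linarith
      have hsle : s ≤ 1 := by
        rw [hsdef]
        nlinarith [sq_nonneg (1-2*t), sq_nonneg (2-a), mul_nonneg ht0.le ht1']
      have hzQ : b + t • (k - b) - s • v ∈ ballInt P := by
        intro y hy
        have h1 : ‖b - y‖ ≤ 2 := by rw [← dist_eq_norm]; exact hb y hy
        have h2 : ‖k - y‖ ≤ 2 := by rw [← dist_eq_norm]; exact hk y hy
        have hip : ‖(b - y) - (k - y)‖ = a := by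
          have he : (b - y) - (k - y) = b - k := by abel
          rw [he, norm_sub_rev]
        have hin : ⟪b - y, k - y⟫ = (‖b - y‖^2 + ‖k - y‖^2 - a^2)/2 := by
          have h3 := norm_sub_sq_real (b - y) (k - y)
          rw [hip] at h3; linarith
        have hX2 : ‖(1-t) • (b - y) + t • (k - y)‖^2 ≤ 4 - 4*s := by
          have hexp := norm_add_sq_real ((1-t) • (b - y)) (t • (k - y))
          rw [norm_smul, norm_smul, real_inner_smul_left, real_inner_smul_right,
            Real.norm_eq_abs, Real.norm_eq_abs, abs_of_nonneg ht1', abs_of_nonneg ht0.le]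
            at hexp
          rw [hexp, hin, hsdef]
          have h1sq : ‖b - y‖^2 ≤ 4 := by nlinarith [norm_nonneg (b - y)]
          have h2sq : ‖k - y‖^2 ≤ 4 := by nlinarith [norm_nonneg (k - y)]
          nlinarith [mul_nonneg ht1' (by linarith : (0:ℝ) ≤ 4 - ‖b - y‖^2),
            mul_nonneg ht0.le (by linarith : (0:ℝ) ≤ 4 - ‖k - y‖^2)]
        have hX : ‖(1-t) • (b - y) + t • (k - y)‖ ≤ 2 - s := by
          nlinarith [norm_nonneg ((1-t) • (b - y) + t • (k - y))]
        have hzy : (b + t • (k - b) - s • v) - y = ((1-t) • (b - y) + t • (k - y)) - s • v := by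
          rw [sub_smul, one_smul, smul_sub, smul_sub, smul_sub]; abel
        calc dist (b + t • (k - b) - s • v) y = ‖(b + t • (k - b) - s • v) - y‖ :=
              dist_eq_norm _ _
          _ ≤ ‖(1-t) • (b - y) + t • (k - y)‖ + ‖s • v‖ := by
              rw [hzy]; exact norm_sub_le _ _
          _ ≤ (2 - s) + s := by
              rw [norm_smul, hv, Real.norm_eq_abs, abs_of_nonneg hs0, mul_one]
              linarith
          _ = 2 := by ring
      have hmz := hmin _ hzQ
      have hzv : ⟪b + t • (k - b) - s • v, v⟫ = ⟪b, v⟫ + t*⟪k - b, v⟫ - s := by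
        rw [inner_sub_left, inner_add_left, real_inner_smul_left, real_inner_smul_left, hvv]
        ring
      rw [hzv] at hmz
      have h4 : t*((1-t)*a^2/4) ≤ t*⟪k - b, v⟫ := by rw [hsdef] at hmz; linarith
      exact le_of_mul_le_mul_left h4 ht0
    have hc0 : 0 ≤ ⟪k - b, v⟫ := by
      have := hmin k hk
      rw [inner_sub_left]; linarith
    by_contra hcon
    push_neg at hcon
    obtain ⟨c, hcdef⟩ : ∃ c : ℝ, c = ⟪k - b, v⟫ := ⟨_, rfl⟩
    rw [← hcdef] at hcon hc0
    have ha2 : 0 < a^2/4 := lt_of_le_of_lt hc0 hcon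
    have ha2' : (0:ℝ) < a^2 := by linarith
    have hδ0 : 0 < a^2/4 - c := by linarith
    have h1 : 0 < 2*(a^2/4 - c)/a^2 := by positivity
    have h2 : 2*(a^2/4 - c)/a^2 < 1 := by rw [div_lt_one ha2']; linarith
    have h3 := step _ h1 h2
    rw [← hcdef] at h3
    have h4 : (1 - 2*(a^2/4 - c)/a^2)*a^2/4 = a^2/4 - (a^2/4 - c)/2 := by
      rw [sub_mul, div_mul_cancel₀ _ ha2'.ne']; ring
    rw [h4] at h3
    linarith
  have hexp : k - (b + (2:ℝ) • v) = (k - b) - (2:ℝ) • v := by abel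
  have hfinal : ‖(k - b) - (2:ℝ) • v‖^2 ≤ 4 := by
    have h5 := norm_sub_sq_real (k - b) ((2:ℝ) • v)
    rw [real_inner_smul_right, norm_smul, Real.norm_eq_abs, hv] at h5
    rw [h5]
    have : |(2:ℝ)| = 2 := by norm_num
    rw [this]
    nlinarith
  rw [dist_eq_norm, hexp]
  nlinarith [norm_nonneg ((k - b) - (2:ℝ) • v)]

lemma interior_nonempty_of_width {n : ℕ} {K : Set (EuclideanSpace ℝ (Fin n))}
    (hne : K.Nonempty) (hconv : Convex ℝ K)
    (hw : ∀ v : EuclideanSpace ℝ (Fin n), ‖v‖ = 1 → suppFn K v + suppFn K (-v) = 2) :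
    (interior K).Nonempty := by
  rw [hconv.interior_nonempty_iff_affineSpan_eq_top]
  by_contra htop
  obtain ⟨z₀, hz₀⟩ := hne
  have hdir : (affineSpan ℝ K).direction ≠ ⊤ := by
    intro h
    exact htop ((AffineSubspace.direction_eq_top_iff_of_nonempty
      ⟨z₀, subset_affineSpan ℝ K hz₀⟩).1 h)
  have horth : ((affineSpan ℝ K).direction)ᗮ ≠ ⊥ := by
    intro h
    exact hdir (Submodule.orthogonal_eq_bot_iff.1 h)
  obtain ⟨u, hu, hu0⟩ := (Submodule.ne_bot_iff _).1 horth
  set u' : EuclideanSpace ℝ (Fin n) := (‖u‖⁻¹ : ℝ) • u with hu'def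
  have hu'1 : ‖u'‖ = 1 := norm_smul_inv_norm hu0
  have hu'mem : u' ∈ ((affineSpan ℝ K).direction)ᗮ :=
    Submodule.smul_mem _ _ hu
  have hconst : ∀ z ∈ K, ⟪z, u'⟫ = ⟪z₀, u'⟫ := by
    intro z hz
    have hmem : z - z₀ ∈ (affineSpan ℝ K).direction := by
      have := AffineSubspace.vsub_mem_direction
        (subset_affineSpan ℝ K hz) (subset_affineSpan ℝ K hz₀)
      simpa [vsub_eq_sub] using this
    have h0 : ⟪z - z₀, u'⟫ = 0 := (Submodule.mem_orthogonal _ _).1 hu'mem _ hmem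
    rw [inner_sub_left] at h0
    linarith
  have himg : (fun x => ⟪x, u'⟫) '' K = {⟪z₀, u'⟫} := by
    apply Set.eq_singleton_iff_nonempty_unique_mem.2
    refine ⟨⟨_, ⟨z₀, hz₀, rfl⟩⟩, ?_⟩
    rintro r ⟨z, hz, rfl⟩
    exact hconst z hz
  have himg' : (fun x => ⟪x, -u'⟫) '' K = {-⟪z₀, u'⟫} := by
    apply Set.eq_singleton_iff_nonempty_unique_mem.2
    refine ⟨⟨-⟪z₀, u'⟫, ⟨z₀, hz₀, ?_⟩⟩, ?_⟩
    · simp [inner_neg_right]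
    · rintro r ⟨z, hz, rfl⟩
      simp only [inner_neg_right, hconst z hz]
  have h1 : suppFn K u' = ⟪z₀, u'⟫ := by rw [suppFn, himg, csSup_singleton]
  have h2 : suppFn K (-u') = -⟪z₀, u'⟫ := by rw [suppFn, himg', csSup_singleton]
  have := hw u' hu'1
  rw [h1, h2] at this
  linarith

theorem diam_le_two_subset_constant_width {n : ℕ} (S : Set (EuclideanSpace ℝ (Fin n)))
    (hS : ∀ x ∈ S, ∀ y ∈ S, dist x y ≤ 2) :
    ∃ K : Set (EuclideanSpace ℝ (Fin n)), IsConstantWidthTwoBody K ∧ S ⊆ K := by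
  obtain ⟨S', hS'ne, hS'diam, hSS'⟩ : ∃ S' : Set (EuclideanSpace ℝ (Fin n)),
      S'.Nonempty ∧ (∀ x ∈ S', ∀ y ∈ S', dist x y ≤ 2) ∧ S ⊆ S' := by
    rcases S.eq_empty_or_nonempty with h | h
    · exact ⟨{0}, ⟨0, rfl⟩, by simp, by simp [h]⟩
    · exact ⟨S, h, hS, subset_rfl⟩
  obtain ⟨x₀, hx₀⟩ := hS'ne
  set P := ballInt S' with hPdef
  set Q := ballInt P with hQdef
  have hSP : S' ⊆ P := fun x hx y hy => hS'diam x hx y hy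
  have hSQ : S' ⊆ Q := subset_ballInt_ballInt S'
  have hQP : Q ⊆ P := ballInt_anti hSP
  have hQeq : ballInt Q = P := ballInt_ballInt_ballInt S'
  have hPne : P.Nonempty := ⟨x₀, hSP hx₀⟩
  have hQne : Q.Nonempty := ⟨x₀, hSQ hx₀⟩
  have hPcomp : IsCompact P :=
    Metric.isCompact_of_isClosed_isBounded (isClosed_ballInt S')
      (Metric.isBounded_closedBall.subset fun z hz => Metric.mem_closedBall.2 (hz x₀ hx₀))
  have hQcomp : IsCompact Q :=
    Metric.isCompact_of_isClosed_isBounded (isClosed_ballInt P)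
      (Metric.isBounded_closedBall.subset fun z hz => Metric.mem_closedBall.2 (hz x₀ (hSP hx₀)))
  have pair : ∀ v : EuclideanSpace ℝ (Fin n), ‖v‖ = 1 →
      suppFn P v + suppFn Q (-v) = 2 := by
    intro v hv
    have hvv : ⟪v, v⟫ = (1:ℝ) := by rw [real_inner_self_eq_norm_sq, hv]; norm_num
    obtain ⟨p, hp, hpv, hpmax⟩ := exists_suppFn_eq hPcomp hPne v
    obtain ⟨b, hbQ, hbv, hbmax⟩ := exists_suppFn_eq hQcomp hQne (-v)
    have hmin : ∀ k ∈ Q, ⟪b, v⟫ ≤ ⟪k, v⟫ := by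
      intro k hk
      have h' := hbmax k hk
      rw [hbv, inner_neg_right, inner_neg_right] at h'
      linarith
    have hkey : b + (2:ℝ) • v ∈ P := by
      rw [← hQeq]
      intro k hk
      rw [dist_comm]
      exact key hv hbQ hmin hk (hbQ k (hQP hk))
    have hle : suppFn P v + suppFn Q (-v) ≤ 2 := by
      rw [hpv, hbv]
      have h1 : dist b p ≤ 2 := hbQ p hp
      have h2 : ⟪p, v⟫ + ⟪b, -v⟫ = ⟪p - b, v⟫ := by
        rw [inner_sub_left, inner_neg_right]; ring
      have h3 : ⟪p - b, v⟫ ≤ ‖p - b‖ * ‖v‖ := real_inner_le_norm _ _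
      rw [hv, mul_one] at h3
      have h4 : ‖p - b‖ = dist b p := by rw [dist_comm, dist_eq_norm]
      linarith
    have hge : 2 ≤ suppFn P v + suppFn Q (-v) := by
      have h1 := hpmax _ hkey
      have h2 : ⟪b + (2:ℝ) • v, v⟫ = ⟪b, v⟫ + 2 := by
        rw [inner_add_left, real_inner_smul_left, hvv]; ring
      rw [hbv, inner_neg_right]
      linarith
    linarith
  set K := (2:ℝ)⁻¹ • (P + Q) with hKdef
  have hKcomp : IsCompact K := IsCompact.smul _ (hPcomp.add hQcomp)
  have hKconv : Convex ℝ K := ((convex_ballInt S').add (convex_ballInt P)).smul _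
  have hSK : S' ⊆ K := by
    intro x hx
    refine ⟨x + x, Set.add_mem_add (hSP hx) (hSQ hx), ?_⟩
    show (2:ℝ)⁻¹ • (x + x) = x
    rw [← two_smul ℝ x, smul_smul]
    norm_num
  have hKne : K.Nonempty := ⟨x₀, hSK hx₀⟩
  have hsupp : ∀ v : EuclideanSpace ℝ (Fin n),
      suppFn K v = 2⁻¹ * (suppFn P v + suppFn Q v) := by
    intro v
    obtain ⟨p, hp, hpv, hpmax⟩ := exists_suppFn_eq hPcomp hPne v
    obtain ⟨q, hq, hqv, hqmax⟩ := exists_suppFn_eq hQcomp hQne v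
    have hKb : BddAbove ((fun x => ⟪x, v⟫) '' K) :=
      (hKcomp.image (continuous_id.inner continuous_const)).bddAbove
    apply le_antisymm
    · apply csSup_le (hKne.image _)
      rintro r ⟨z, hz, rfl⟩
      obtain ⟨w, hw, rfl⟩ := hz
      obtain ⟨p', hp', q', hq', rfl⟩ := hw
      have he : ⟪(2:ℝ)⁻¹ • (p' + q'), v⟫ = 2⁻¹ * (⟪p', v⟫ + ⟪q', v⟫) := by
        rw [real_inner_smul_left, inner_add_left]
      show ⟪(2:ℝ)⁻¹ • (p' + q'), v⟫ ≤ 2⁻¹ * (suppFn P v + suppFn Q v)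
      rw [he]
      have h1 := hpmax p' hp'
      have h2 := hqmax q' hq'
      linarith
    · have hmem : (2:ℝ)⁻¹ • (p + q) ∈ K := ⟨p + q, Set.add_mem_add hp hq, rfl⟩
      have h1 : ⟪(2:ℝ)⁻¹ • (p + q), v⟫ ≤ suppFn K v := le_csSup hKb ⟨_, hmem, rfl⟩
      have he : ⟪(2:ℝ)⁻¹ • (p + q), v⟫ = 2⁻¹ * (⟪p, v⟫ + ⟪q, v⟫) := by
        rw [real_inner_smul_left, inner_add_left]
      rw [he] at h1
      rw [hpv, hqv]
      exact h1
  have hwidth : ∀ v : EuclideanSpace ℝ (Fin n), ‖v‖ = 1 →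
      suppFn K v + suppFn K (-v) = 2 := by
    intro v hv
    have h1 := pair v hv
    have h2 := pair (-v) (by rw [norm_neg, hv])
    rw [neg_neg] at h2
    rw [hsupp v, hsupp (-v)]
    linarith
  exact ⟨K, ⟨hKcomp, hKconv,
    interior_nonempty_of_width hKne hKconv hwidth, hwidth⟩,
    fun x hx => hSK (hSS' hx)⟩
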